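/- arXiv:1606.08872 — 2 statements merged into one kernel-verified Lean document; each statement's English description precedes it below -/
import Mathlib

section
/- Let 1 ≤ t ≤ r, let k_1, …, k_{t−1} be integers with 1 ≤ k_s ≤ s+1 for each 1 ≤ s ≤ t−1, and let 1 ≤ j ≤ t. Then the root π_{k_1} π_{k_2} ⋯ π_{k_{t−1}}(α_j + α_{j+1} + ⋯ + α_t) is a positive root (here α_j + ⋯ + α_t = e_j − e_{t+1}, each factor π_{k_s} is the cycle with ambient index s, and the empty product, when t = 1, is the identity). -/
open Equiv Finset

/-- The simple reflection `s i = (i, i+1)` (1-based) in `S_{r+1}`, for `1 ≤ i ≤ r`;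
the junk value `1` otherwise. -/
def sr (r i : ℕ) : Equiv.Perm (Fin (r + 1)) :=
  if h : 1 ≤ i ∧ i ≤ r then Equiv.swap ⟨i - 1, by omega⟩ ⟨i, by omega⟩ else 1

/-- The cycle `π_k` with ambient index `i`, i.e. `s_i s_{i-1} ⋯ s_k`
(the identity when `k = i + 1`). -/
def cyc (r i k : ℕ) : Equiv.Perm (Fin (r + 1)) :=
  ((List.range (i + 1 - k)).map fun t => sr r (i - t)).prod

/-- The product `π_{k i} π_{k (i+1)} ⋯ π_{k j}`, the factor `π_{k t}` being the
cycle with ambient index `t`. -/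
def cycProd (r : ℕ) (k : ℕ → ℕ) (i j : ℕ) : Equiv.Perm (Fin (r + 1)) :=
  ((List.range' i (j + 1 - i)).map fun t => cyc r t (k t)).prod

/-- Coxeter length of a permutation: the number of inversions. -/
def lenInv {n : ℕ} (w : Equiv.Perm (Fin n)) : ℕ :=
  (Finset.univ.filter fun p : Fin n × Fin n => p.1 < p.2 ∧ w p.2 < w p.1).card

/-- Partial sums of a (1-based) composition: `psum c j = c 1 + ⋯ + c j`. -/
def psum (c : ℕ → ℕ) (j : ℕ) : ℕ := ∑ i ∈ Finset.Icc 1 j, c i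

/-- The transpose partition of `(t 1, …, t b)`: `transp b t j = #{i ∈ [1,b] : t i ≥ j}`. -/
def transp (b : ℕ) (t : ℕ → ℕ) (j : ℕ) : ℕ :=
  ((Finset.Icc 1 b).filter fun i => j ≤ t i).card

/-- The element of `Fin (r+1)` with value `i` (for `i ≤ r`). -/
def finOf (r i : ℕ) : Fin (r + 1) := ⟨min i r, by omega⟩

/-- `w(α_i)` is a positive root, where `α_i = e_i − e_{i+1}` (1-based), i.e. the
0-based pair `(i-1, i)`; `w(e_c − e_d) = e_{w c} − e_{w d}` is positive iff `w c < w d`. -/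
def posRoot (r : ℕ) (w : Equiv.Perm (Fin (r + 1))) (i : ℕ) : Prop :=
  (w (finOf r (i - 1)) : ℕ) < w (finOf r i)

/-- `w(α_i)` is a negative root. -/
def negRoot (r : ℕ) (w : Equiv.Perm (Fin (r + 1))) (i : ℕ) : Prop :=
  (w (finOf r i) : ℕ) < w (finOf r (i - 1))

/-- `w(α_i)` is a simple root. -/
def simpleRoot (r : ℕ) (w : Equiv.Perm (Fin (r + 1))) (i : ℕ) : Prop :=
  (w (finOf r i) : ℕ) = (w (finOf r (i - 1)) : ℕ) + 1

/-- `w(α_i) = α_j` (as roots: the image pair is `(j-1, j)` in 0-based indices). -/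
def eqRoot (r : ℕ) (w : Equiv.Perm (Fin (r + 1))) (i j : ℕ) : Prop :=
  (w (finOf r (i - 1)) : ℕ) = j - 1 ∧ (w (finOf r i) : ℕ) = j

/-- `Π_l Π_{l+1} ⋯ Π_a` for the composition `c` and tuple `k`, where
`Π_j = π_{k_{x_{j-1}}} ⋯ π_{k_{x_j - 1}}` and `x_j = psum c j`. -/
def tailProd (r a : ℕ) (c k : ℕ → ℕ) (l : ℕ) : Equiv.Perm (Fin (r + 1)) :=
  ((List.range' l (a + 1 - l)).map fun j => cycProd r k (psum c (j - 1)) (psum c j - 1)).prod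

/-- The subgroup `W(P)`: generated by the simple reflections `s i` with `i ∈ [1,r]`
avoiding the partial sums `x 1, …, x (a-1)` of the composition `c`. -/
def WP (r a : ℕ) (c : ℕ → ℕ) : Subgroup (Equiv.Perm (Fin (r + 1))) :=
  Subgroup.closure
    {g | ∃ i, 1 ≤ i ∧ i ≤ r ∧ (∀ j, 1 ≤ j → j ≤ a - 1 → i ≠ psum c j) ∧ g = sr r i}

/-- `α_i ∈ Δ_λ` for the composition `λ = (p 1, …, p m)` of `r+1`. -/
def inDelta (r m : ℕ) (p : ℕ → ℕ) (i : ℕ) : Prop :=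
  1 ≤ i ∧ i ≤ r ∧ ∀ j, 1 ≤ j → j ≤ m - 1 → i ≠ psum p j

/-- The left coset `H · g`. -/
def cosetOf {G : Type*} [Group G] (H : Subgroup G) (g : G) : Set G :=
  {x | ∃ h ∈ H, x = h * g}

/-- The (0-based) positions `u` and `v` lie in the same block of the composition
`μ^⊤ = transp b t`; a negative root `e_c − e_d` lies in `Φ⁻_{μ^⊤}` iff its two
indices lie in the same block. -/
def sameBlock (b : ℕ) (t : ℕ → ℕ) (u v : ℕ) : Prop :=
  ∃ j, 1 ≤ j ∧ j ≤ t 1 ∧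
    psum (transp b t) (j - 1) ≤ u ∧ u < psum (transp b t) j ∧
    psum (transp b t) (j - 1) ≤ v ∧ v < psum (transp b t) j

lemma prod_fix {n : ℕ} (L : List (Equiv.Perm (Fin n))) (x : Fin n)
    (h : ∀ g ∈ L, g x = x) : L.prod x = x := by
  induction L with
  | nil => simp
  | cons a L ih =>
    simp only [List.prod_cons, Equiv.Perm.mul_apply]
    rw [ih (fun g hg => h g (List.mem_cons_of_mem a hg)), h a List.mem_cons_self]

lemma sr_fix (r t i : ℕ) (hi : i < t) (x : Fin (r + 1)) (hx : t ≤ x.val) :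
    sr r i x = x := by
  unfold sr
  split
  · apply Equiv.swap_apply_of_ne_of_ne <;>
      · intro he
        have := congrArg Fin.val he
        simp only [] at this
        omega
  · rfl

lemma cyc_fix (r t s ks : ℕ) (hs : s < t) (x : Fin (r + 1)) (hx : t ≤ x.val) :
    cyc r s ks x = x := by
  unfold cyc
  apply prod_fix
  intro g hg
  simp only [List.mem_map, List.mem_range] at hg
  obtain ⟨u, hu, rfl⟩ := hg
  exact sr_fix r t _ (by omega) x hx

lemma cycProd_fix (r t : ℕ) (k : ℕ → ℕ) (x : Fin (r + 1)) (hx : t ≤ x.val) :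
    cycProd r k 1 (t - 1) x = x := by
  unfold cycProd
  apply prod_fix
  intro g hg
  simp only [List.mem_map, List.mem_range'] at hg
  obtain ⟨s, hs, rfl⟩ := hg
  exact cyc_fix r t s _ (by omega) x hx

/-- `π_{k_1} ⋯ π_{k_{t-1}} (α_j + ⋯ + α_t)` is a positive root,
where `α_j + ⋯ + α_t = e_j − e_{t+1}` (1-based), i.e. the 0-based pair `(j-1, t)`. -/
theorem stmt2 (r t j : ℕ) (ht1 : 1 ≤ t) (htr : t ≤ r) (hj1 : 1 ≤ j) (hjt : j ≤ t)
    (k : ℕ → ℕ) (hk : ∀ s, 1 ≤ s → s ≤ t - 1 → 1 ≤ k s ∧ k s ≤ s + 1) :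
    (cycProd r k 1 (t - 1) (finOf r (j - 1)) : ℕ) < cycProd r k 1 (t - 1) (finOf r t) := by
  set w := cycProd r k 1 (t - 1) with hw
  have hfix : ∀ x : Fin (r + 1), t ≤ x.val → w x = x := fun x hx => cycProd_fix r t k x hx
  have htval : (finOf r t).val = t := by simp [finOf]; omega
  have hjval : (finOf r (j - 1)).val = j - 1 := by simp [finOf]; omega
  have hwt : w (finOf r t) = finOf r t := hfix _ (by omega)
  have hlt : (w (finOf r (j - 1))).val < t := by
    by_contra hge
    push_neg at hge
    have h1 : w (w (finOf r (j - 1))) = w (finOf r (j - 1)) := hfix _ hge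
    have h2 : w (finOf r (j - 1)) = finOf r (j - 1) := w.injective h1
    rw [h2, hjval] at hge
    omega
  calc (w (finOf r (j - 1)) : ℕ) < t := hlt
    _ = (w (finOf r t) : ℕ) := by rw [hwt, htval]
end

section
/- For every tuple (k_{x_1}, …, k_r) ∈ D_{(r_1⋯r_a)}, the element w = Π_2 Π_3 ⋯ Π_a has minimal Coxeter length in its left coset W(P)w; that is, ℓ(uw) ≥ ℓ(w) for every u ∈ W(P). -/
open Equiv Finset

lemma sr_apply (r i : ℕ) (h1 : 1 ≤ i) (h2 : i ≤ r) (x : Fin (r + 1)) :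
    ((sr r i x : Fin (r + 1)) : ℕ) =
      if (x : ℕ) = i - 1 then i else if (x : ℕ) = i then i - 1 else (x : ℕ) := by
  rw [sr, dif_pos ⟨h1, h2⟩]
  rcases eq_or_ne x ⟨i - 1, by omega⟩ with rfl | hx1
  · rw [Equiv.swap_apply_left]
    simp only [Fin.val_mk]
    split_ifs <;> omega
  · rcases eq_or_ne x ⟨i, by omega⟩ with rfl | hx2
    · rw [Equiv.swap_apply_right]
      simp only [Fin.val_mk]
      split_ifs <;> omega
    · have n1 : (x : ℕ) ≠ i - 1 := fun h => hx1 (Fin.ext h)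
      have n2 : (x : ℕ) ≠ i := fun h => hx2 (Fin.ext h)
      rw [Equiv.swap_apply_of_ne_of_ne hx1 hx2, if_neg n1, if_neg n2]

lemma sr_inv (r i : ℕ) : (sr r i)⁻¹ = sr r i := by
  unfold sr; split_ifs
  · exact Equiv.swap_inv _ _
  · exact inv_one

lemma cyc_peel (r i k : ℕ) (h : k ≤ i) : cyc r i k = cyc r i (k + 1) * sr r k := by
  unfold cyc
  rw [show i + 1 - k = (i - k) + 1 by omega, show i + 1 - (k + 1) = i - k by omega,
    List.range_succ, List.map_append, List.prod_append]
  simp only [List.map_singleton, List.prod_singleton, show i - (i - k) = k by omega]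

lemma cyc_inv_apply (r i : ℕ) (hir : i ≤ r) :
    ∀ n k, 1 ≤ k → k ≤ i + 1 → i + 1 - k = n → ∀ y : Fin (r + 1),
      (((cyc r i k)⁻¹ y : Fin (r + 1)) : ℕ) =
        if (y : ℕ) = i then k - 1
        else if k ≤ (y : ℕ) + 1 ∧ (y : ℕ) + 1 ≤ i then (y : ℕ) + 1 else (y : ℕ) := by
  intro n
  induction n with
  | zero =>
    intro k hk1 hk2 hn y
    have hk : k = i + 1 := by omega
    subst hk
    have h1 : cyc r i (i + 1) = 1 := by
      unfold cyc; rw [show i + 1 - (i + 1) = 0 by omega]; rfl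
    rw [h1]
    simp only [inv_one, Equiv.Perm.one_apply]
    split_ifs <;> omega
  | succ n ih =>
    intro k hk1 hk2 hn y
    have hki : k ≤ i := by omega
    rw [cyc_peel r i k hki, mul_inv_rev, Equiv.Perm.mul_apply, sr_inv]
    have hz := ih (k + 1) (by omega) (by omega) (by omega) y
    have hs := sr_apply r k hk1 (by omega) ((cyc r i (k + 1))⁻¹ y)
    rw [hz] at hs
    rw [hs]
    have hy := y.isLt
    split_ifs <;> omega

lemma cycProd_empty (r : ℕ) (k : ℕ → ℕ) (p q : ℕ) (h : q + 1 ≤ p) : cycProd r k p q = 1 := by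
  unfold cycProd
  rw [show q + 1 - p = 0 by omega]
  rfl

lemma cycProd_peel (r : ℕ) (k : ℕ → ℕ) (p q : ℕ) (h : p ≤ q) :
    cycProd r k p q = cyc r p (k p) * cycProd r k (p + 1) q := by
  unfold cycProd
  rw [show q + 1 - p = (q - p) + 1 by omega, show q + 1 - (p + 1) = q - p by omega,
    List.range'_succ, List.map_cons, List.prod_cons]

lemma cycProd_spec (r : ℕ) (k : ℕ → ℕ) :
    ∀ n p q, q ≤ r → p ≤ q + 1 → q + 1 - p = n →
    (∀ i, p ≤ i → i ≤ q → 1 ≤ k i ∧ k i ≤ i + 1) →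
    (∀ i, p ≤ i → i + 1 ≤ q → k i < k (i + 1)) →
    (∀ y : Fin (r + 1), ((y : ℕ) + 1 < k p ∨ q < (y : ℕ)) → (cycProd r k p q)⁻¹ y = y) ∧
    (∀ y : Fin (r + 1), p ≤ (y : ℕ) → (y : ℕ) ≤ q →
      (((cycProd r k p q)⁻¹ y : Fin (r + 1)) : ℕ) = k (y : ℕ) - 1) ∧
    (∀ y : Fin (r + 1), (y : ℕ) < p → (((cycProd r k p q)⁻¹ y : Fin (r + 1)) : ℕ) ≤ q) ∧
    (∀ y1 y2 : Fin (r + 1), (y1 : ℕ) < (y2 : ℕ) → (y2 : ℕ) < p →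
      (((cycProd r k p q)⁻¹ y1 : Fin (r + 1)) : ℕ) < ((cycProd r k p q)⁻¹ y2 : Fin (r + 1))) := by
  intro n
  induction n with
  | zero =>
    intro p q hqr hpq hn H1 H2
    rw [cycProd_empty r k p q (by omega)]
    simp only [inv_one, Equiv.Perm.one_apply]
    exact ⟨fun y _ => by trivial, fun y h1 h2 => by omega, fun y h => by omega, fun y1 y2 h _ => h⟩
  | succ n ih =>
    intro p q hqr hpq hn H1 H2
    have hpq' : p ≤ q := by omega
    obtain ⟨hkp1, hkp2⟩ := H1 p le_rfl hpq'
    have hpr : p ≤ r := le_trans hpq' hqr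
    obtain ⟨ih0, ih1, ih2b, ih2a⟩ := ih (p + 1) q hqr (by omega) (by omega)
      (fun i h1 h2 => H1 i (by omega) h2) (fun i h1 h2 => H2 i (by omega) h2)
    rw [cycProd_peel r k p q hpq']
    simp only [mul_inv_rev, Equiv.Perm.mul_apply]
    have hA := fun y => cyc_inv_apply r p hpr (p + 1 - k p) (k p) hkp1 hkp2 rfl y
    -- value of (cyc r p (k p))⁻¹ y as a ℕ, and a Fin-level consequence
    have hAfix : ∀ y : Fin (r + 1), (y : ℕ) ≠ p → ¬(k p ≤ (y : ℕ) + 1 ∧ (y : ℕ) + 1 ≤ p) →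
        (cyc r p (k p))⁻¹ y = y := by
      intro y h1 h2
      apply Fin.ext
      rw [hA y, if_neg h1, if_neg h2]
    constructor
    · -- fixes low and high values
      intro y hy
      rcases hy with hy | hy
      · -- y + 1 < k p
        have hylow : (y : ℕ) < p := by omega
        rw [hAfix y (by omega) (by omega)]
        by_cases hpq2 : p = q
        · rw [cycProd_empty r k (p + 1) q (by omega)]; rfl
        · exact ih0 y (Or.inl (by have := H2 p le_rfl (by omega); omega))
      · -- q < y
        rw [hAfix y (by omega) (by omega)]
        exact ih0 y (Or.inr hy)
    constructor
    · -- middle values go to k y - 1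
      intro y hpy hyq
      rcases eq_or_lt_of_le hpy with he | hlt
      · -- y = p
        have hAy : ((cyc r p (k p))⁻¹ y : ℕ) = k p - 1 := by rw [hA y, if_pos he.symm]
        have hres : (cycProd r k (p + 1) q)⁻¹ ((cyc r p (k p))⁻¹ y) = (cyc r p (k p))⁻¹ y := by
          by_cases hpq2 : p = q
          · rw [cycProd_empty r k (p + 1) q (by omega)]; rfl
          · exact ih0 _ (Or.inl (by have := H2 p le_rfl (by omega); omega))
        rw [hres, hAy, ← he]
      · -- y > p
        rw [hAfix y (by omega) (by omega)]
        exact ih1 y hlt hyq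
    constructor
    · -- bound for low values
      intro y hy
      have hAv := hA y
      have : ((cyc r p (k p))⁻¹ y : ℕ) < p + 1 := by
        rw [hAv]; split_ifs <;> omega
      exact ih2b _ this
    · -- strictly increasing on low values
      intro y1 y2 h12 h2p
      have hv1 : ((cyc r p (k p))⁻¹ y1 : ℕ) ≤ (y1 : ℕ) + 1 := by
        rw [hA y1]; split_ifs <;> omega
      have hv2 : (y2 : ℕ) ≤ ((cyc r p (k p))⁻¹ y2 : ℕ) := by
        rw [hA y2]; split_ifs <;> omega
      have hv2b : ((cyc r p (k p))⁻¹ y2 : ℕ) < p + 1 := by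
        rw [hA y2]; split_ifs <;> omega
      have hne : (cyc r p (k p))⁻¹ y1 ≠ (cyc r p (k p))⁻¹ y2 := by
        intro h
        exact absurd (Equiv.injective _ h) (by intro h'; rw [h'] at h12; omega)
      have : ((cyc r p (k p))⁻¹ y1 : ℕ) < ((cyc r p (k p))⁻¹ y2 : ℕ) := by
        have hne' : ((cyc r p (k p))⁻¹ y1 : ℕ) ≠ ((cyc r p (k p))⁻¹ y2 : ℕ) :=
          fun h => hne (Fin.ext h)
        omega
      exact ih2a _ _ this hv2b

lemma psum_succ (c : ℕ → ℕ) (j : ℕ) : psum c (j + 1) = psum c j + c (j + 1) :=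
  Finset.sum_Icc_succ_top (by omega) c

lemma psum_mono (c : ℕ → ℕ) {j j' : ℕ} (h : j ≤ j') : psum c j ≤ psum c j' :=
  Finset.sum_le_sum_of_subset (Finset.Icc_subset_Icc le_rfl h)

def headP (r : ℕ) (c k : ℕ → ℕ) (l : ℕ) : Equiv.Perm (Fin (r + 1)) :=
  ((List.range' 2 (l - 1)).map fun j => cycProd r k (psum c (j - 1)) (psum c j - 1)).prod

lemma headP_one (r : ℕ) (c k : ℕ → ℕ) : headP r c k 1 = 1 := rfl

lemma headP_succ (r : ℕ) (c k : ℕ → ℕ) (l : ℕ) (hl : 1 ≤ l) :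
    headP r c k (l + 1) = headP r c k l * cycProd r k (psum c l) (psum c (l + 1) - 1) := by
  unfold headP
  rw [show l + 1 - 1 = (l - 1) + 1 by omega, List.range'_concat,
    show 2 + 1 * (l - 1) = l + 1 by omega, List.map_append, List.prod_append,
    List.map_singleton, List.prod_singleton, show l + 1 - 1 = l by omega]

lemma head_spec (r a : ℕ) (ha : 1 ≤ a) (c k : ℕ → ℕ)
    (hc : ∀ j, 1 ≤ j → j ≤ a → 1 ≤ c j) (hcsum : psum c a = r + 1)
    (hka : ∀ i, psum c 1 ≤ i → i ≤ r → 1 ≤ k i ∧ k i ≤ i + 1)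
    (hkb : ∀ j, 2 ≤ j → j ≤ a → ∀ i, psum c (j - 1) ≤ i → i + 1 ≤ psum c j - 1 →
      k i < k (i + 1)) :
    ∀ l, 1 ≤ l → l ≤ a →
      (∀ y : Fin (r + 1), psum c l ≤ (y : ℕ) → (headP r c k l)⁻¹ y = y) ∧
      (∀ v v' : Fin (r + 1), (v : ℕ) + 1 = (v' : ℕ) → (v' : ℕ) < psum c l →
        (∀ j, 1 ≤ j → j ≤ l - 1 → (v' : ℕ) ≠ psum c j) →
        (((headP r c k l)⁻¹ v : Fin (r + 1)) : ℕ) < ((headP r c k l)⁻¹ v' : Fin (r + 1))) := by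
  intro l
  induction l with
  | zero => omega
  | succ l ih =>
    intro _ hla
    by_cases hl0 : l = 0
    · subst hl0
      rw [headP_one]
      exact ⟨fun y _ => rfl, fun v v' h _ _ => by simpa using by omega⟩
    · have hl1 : 1 ≤ l := by omega
      obtain ⟨ihA, ihB⟩ := ih hl1 (by omega)
      set w := headP r c k l with hw
      set p := psum c l with hp
      set q := psum c (l + 1) - 1 with hq
      have hps : psum c (l + 1) = psum c l + c (l + 1) := psum_succ c l
      have hc1 : 1 ≤ c (l + 1) := hc (l + 1) (by omega) hla
      have hmon : psum c (l + 1) ≤ psum c a := psum_mono c hla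
      have hp1 : psum c 1 ≤ p := psum_mono c hl1
      have hc11 : 1 ≤ c 1 := hc 1 (by omega) (by omega)
      have hpc1 : 1 ≤ psum c 1 := by
        have : psum c 1 = c 1 := by simp [psum]
        omega
      have hpq : p ≤ q := by omega
      have hq1 : q + 1 = psum c (l + 1) := by omega
      have hqr : q ≤ r := by omega
      obtain ⟨s0, s1, s2b, s2a⟩ := cycProd_spec r k (q + 1 - p) p q hqr (by omega) rfl
        (fun i h1 h2 => hka i (by omega) (by omega))
        (fun i h1 h2 => hkb (l + 1) (by omega) hla i (by simpa using h1) (by omega))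
      rw [headP_succ r c k l hl1, ← hw, ← hp, ← hq]
      simp only [mul_inv_rev, Equiv.Perm.mul_apply]
      -- w⁻¹ maps values < p to values < p
      have hwlow : ∀ x : Fin (r + 1), (x : ℕ) < p → ((w⁻¹ x : Fin (r + 1)) : ℕ) < p := by
        intro x hx
        by_contra hcon
        push_neg at hcon
        have h1 := ihA (w⁻¹ x) hcon
        have h2 := congrArg w h1
        simp only [Equiv.Perm.inv_def, Equiv.apply_symm_apply] at h2; rw [← Equiv.Perm.inv_def] at h2
        rw [h2] at hcon
        omega
      constructor
      · intro y hy
        rw [ihA y (by omega)]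
        exact s0 y (Or.inr (by omega))
      · intro v v' hvv hv' hbd
        rcases lt_trichotomy ((v' : ℕ)) p with hcase | hcase | hcase
        · have hvb := ihB v v' hvv hcase (fun j h1 h2 => hbd j h1 (by omega))
          exact s2a _ _ hvb (hwlow v' hcase)
        · exact absurd (hcase.trans hp) (hbd l hl1 (by omega))
        · have hv : p ≤ (v : ℕ) := by omega
          rw [ihA v hv, ihA v' (by omega)]
          have hv'q : (v' : ℕ) ≤ q := by omega
          rw [s1 v hv (by omega), s1 v' (by omega) hv'q]
          have hkk : k (v : ℕ) < k ((v : ℕ) + 1) :=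
            hkb (l + 1) (by omega) hla (v : ℕ) (by simpa using hv) (by omega)
          have hk1 : 1 ≤ k (v : ℕ) := (hka (v : ℕ) (by omega) (by omega)).1
          rw [← hvv]
          omega

def blkf (a : ℕ) (c : ℕ → ℕ) (m : ℕ) : ℕ :=
  ((Finset.Icc 1 a).filter fun j => psum c j ≤ m).card

lemma blkf_mono (a : ℕ) (c : ℕ → ℕ) {m m' : ℕ} (h : m ≤ m') : blkf a c m ≤ blkf a c m' := by
  apply Finset.card_le_card
  intro x hx
  simp only [Finset.mem_filter] at *
  exact ⟨hx.1, le_trans hx.2 h⟩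

lemma blkf_strict (a : ℕ) (c : ℕ → ℕ) {j m m' : ℕ} (hj : 1 ≤ j) (hja : j ≤ a)
    (h1 : m < psum c j) (h2 : psum c j ≤ m') : blkf a c m < blkf a c m' := by
  apply Finset.card_lt_card
  rw [Finset.ssubset_iff_of_subset]
  · refine ⟨j, ?_, ?_⟩
    · simp only [Finset.mem_filter, Finset.mem_Icc]
      exact ⟨⟨hj, hja⟩, h2⟩
    · simp only [Finset.mem_filter, Finset.mem_Icc]
      intro hcon
      omega
  · intro x hx
    simp only [Finset.mem_filter] at *
    exact ⟨hx.1, by omega⟩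

lemma blkf_adj (a : ℕ) (c : ℕ → ℕ) {m : ℕ} (h : blkf a c m = blkf a c (m + 1)) :
    ∀ j, 1 ≤ j → j ≤ a → psum c j ≠ m + 1 := by
  intro j h1 h2 hcon
  have := blkf_strict a c (m := m) (m' := m + 1) h1 h2 (by omega) (le_of_eq hcon)
  omega

lemma blkf_eq_adj (r a : ℕ) (c : ℕ → ℕ) (hcsum : psum c a = r + 1) {i : ℕ}
    (h1 : 1 ≤ i) (h2 : i ≤ r) (hb : ∀ j, 1 ≤ j → j ≤ a - 1 → i ≠ psum c j) :
    blkf a c (i - 1) = blkf a c i := by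
  unfold blkf
  congr 1
  apply Finset.filter_congr
  intro j hj
  simp only [Finset.mem_Icc] at hj
  have hne : psum c j ≠ i := by
    rcases eq_or_lt_of_le hj.2 with he | hlt
    · rw [he, hcsum]; omega
    · exact fun hc => hb j hj.1 (by omega) hc.symm
  omega

lemma wp_blk (r a : ℕ) (c : ℕ → ℕ) (hcsum : psum c a = r + 1) {u : Equiv.Perm (Fin (r + 1))}
    (hu : u ∈ WP r a c) : ∀ x : Fin (r + 1), blkf a c ((u x : Fin (r + 1)) : ℕ) = blkf a c (x : ℕ) := by
  refine Subgroup.closure_induction (p := fun g _ => ∀ x : Fin (r + 1),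
    blkf a c ((g x : Fin (r + 1)) : ℕ) = blkf a c (x : ℕ)) ?_ ?_ ?_ ?_ hu
  · rintro g ⟨i, h1, h2, h3, rfl⟩ x
    have hblk : blkf a c (i - 1) = blkf a c i := blkf_eq_adj r a c hcsum h1 h2 h3
    rw [sr, dif_pos ⟨h1, h2⟩]
    rcases eq_or_ne x ⟨i - 1, by omega⟩ with rfl | hx1
    · rw [Equiv.swap_apply_left]
      exact hblk.symm
    · rcases eq_or_ne x ⟨i, by omega⟩ with rfl | hx2
      · rw [Equiv.swap_apply_right]
        exact hblk
      · rw [Equiv.swap_apply_of_ne_of_ne hx1 hx2]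
  · intro x; rfl
  · intro f g _ _ hf hg x
    rw [Equiv.Perm.mul_apply, hf, hg]
  · intro f _ hf x
    have := hf (f⁻¹ x)
    rw [Equiv.Perm.inv_def, Equiv.apply_symm_apply] at this
    exact this.symm

/-- `w = Π_2 ⋯ Π_a` has minimal Coxeter length in its left coset
`W(P) w`. -/
theorem stmt5 (r a : ℕ) (hr : 1 ≤ r) (ha : 1 ≤ a) (c k : ℕ → ℕ)
    (hc : ∀ j, 1 ≤ j → j ≤ a → 1 ≤ c j) (hcsum : psum c a = r + 1)
    (hka : ∀ i, psum c 1 ≤ i → i ≤ r → 1 ≤ k i ∧ k i ≤ i + 1)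
    (hkb : ∀ j, 2 ≤ j → j ≤ a → ∀ i, psum c (j - 1) ≤ i → i + 1 ≤ psum c j - 1 →
      k i < k (i + 1)) :
    ∀ u ∈ WP r a c, lenInv (tailProd r a c k 2) ≤ lenInv (u * tailProd r a c k 2) := by
  intro u hu
  have hwh : tailProd r a c k 2 = headP r c k a := by
    unfold tailProd headP
    rw [show a + 1 - 2 = a - 1 by omega]
  rw [hwh]
  obtain ⟨hA, hB⟩ := head_spec r a ha c k hc hcsum hka hkb a ha le_rfl
  -- adjacent same-block values have increasing positions
  have hadj : ∀ v1 v2 : Fin (r + 1), (v2 : ℕ) = (v1 : ℕ) + 1 →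
      blkf a c (v1 : ℕ) = blkf a c (v2 : ℕ) →
      (((headP r c k a)⁻¹ v1 : Fin (r + 1)) : ℕ) < ((headP r c k a)⁻¹ v2 : Fin (r + 1)) := by
    intro v1 v2 h12 hbk
    apply hB v1 v2 (by omega)
    · have := v2.isLt; omega
    · intro j hj1 hj2 hcon
      rw [h12] at hbk
      have := blkf_adj a c hbk j hj1 (by omega)
      omega
  -- same-block values have increasing positions
  have hC : ∀ m, ∀ v1 v2 : Fin (r + 1), (v2 : ℕ) = (v1 : ℕ) + m + 1 →
      blkf a c (v1 : ℕ) = blkf a c (v2 : ℕ) →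
      (((headP r c k a)⁻¹ v1 : Fin (r + 1)) : ℕ) < ((headP r c k a)⁻¹ v2 : Fin (r + 1)) := by
    intro m
    induction m with
    | zero => intro v1 v2 h12 hbk; exact hadj v1 v2 (by omega) hbk
    | succ m ihm =>
      intro v1 v2 h12 hbk
      have hlt : (v1 : ℕ) + m + 1 < r + 1 := by have := v2.isLt; omega
      set vm : Fin (r + 1) := ⟨(v1 : ℕ) + m + 1, hlt⟩ with hvm
      have hvmv : (vm : ℕ) = (v1 : ℕ) + m + 1 := rfl
      have m1 : blkf a c (v1 : ℕ) ≤ blkf a c (vm : ℕ) := blkf_mono a c (by omega)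
      have m2 : blkf a c (vm : ℕ) ≤ blkf a c (v2 : ℕ) := blkf_mono a c (by omega)
      have hb1 : blkf a c (v1 : ℕ) = blkf a c (vm : ℕ) := by omega
      have hb2 : blkf a c (vm : ℕ) = blkf a c (v2 : ℕ) := by omega
      exact lt_trans (ihm v1 vm (by omega) hb1) (hadj vm v2 (by omega) hb2)
  unfold lenInv
  apply Finset.card_le_card
  intro pr hpr
  simp only [Finset.mem_filter, Finset.mem_univ, true_and] at hpr ⊢
  obtain ⟨h12, hinv⟩ := hpr
  refine ⟨h12, ?_⟩
  have hvlt : ((headP r c k a pr.2 : Fin (r + 1)) : ℕ) < (headP r c k a pr.1 : Fin (r + 1)) :=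
    hinv
  have hble : blkf a c ((headP r c k a pr.2 : Fin (r + 1)) : ℕ) ≤
      blkf a c ((headP r c k a pr.1 : Fin (r + 1)) : ℕ) := blkf_mono a c (le_of_lt hvlt)
  have hbne : blkf a c ((headP r c k a pr.2 : Fin (r + 1)) : ℕ) ≠
      blkf a c ((headP r c k a pr.1 : Fin (r + 1)) : ℕ) := by
    intro he
    have hd := hC (((headP r c k a pr.1 : Fin (r + 1)) : ℕ) -
      ((headP r c k a pr.2 : Fin (r + 1)) : ℕ) - 1)
      (headP r c k a pr.2) (headP r c k a pr.1) (by omega) he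
    simp only [Equiv.Perm.inv_def, Equiv.symm_apply_apply] at hd
    have h12' : (pr.1 : ℕ) < (pr.2 : ℕ) := h12
    omega
  have hub2 := wp_blk r a c hcsum hu (headP r c k a pr.2)
  have hub1 := wp_blk r a c hcsum hu (headP r c k a pr.1)
  show (u * headP r c k a) pr.2 < (u * headP r c k a) pr.1
  simp only [Equiv.Perm.mul_apply]
  rw [Fin.lt_def]
  by_contra hcon
  push_neg at hcon
  have hmon := blkf_mono a c hcon
  rw [hub1, hub2] at hmon
  omega
end
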